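/- Let K ⊂ R^N be compact, let Ω > 0, and set L := ⌈(2N/π)·rad(K)·Ω − 1/2⌉. Then for all x, y ∈ K, ∫_{[0,Ω]^N} ( ∏_{j=1}^N w(j)·cos_Ω( w(j)·(x(j) − y(j)) ) ) dw = 2^{−N} ∫_{[−Ω,Ω]^N} cos_Ω( ⟨w, x − y⟩ ) · | ∏_{j=1}^N w(j) | dw. -/

import Mathlib

open MeasureTheory Real
open scoped RealInnerProductSpace

noncomputable section

/-- The radius of a set: `rad S = sup_{x ∈ S} ‖x‖`. -/
def rad {N : ℕ} (S : Set (EuclideanSpace ℝ (Fin N))) : ℝ :=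
  sSup ((fun x => ‖x‖) '' S)

/-- `L := ⌈(2N/π)·rad(K)·Ω − 1/2⌉`. -/
def Lceil {N : ℕ} (K : Set (EuclideanSpace ℝ (Fin N))) (Ω : ℝ) : ℤ :=
  ⌈(2 * (N : ℝ) / π) * rad K * Ω - 1 / 2⌉

/-- Half-length `(2L+1)·π/2` of the truncation interval. -/
def halfLen {N : ℕ} (K : Set (EuclideanSpace ℝ (Fin N))) (Ω : ℝ) : ℝ :=
  (2 * (Lceil K Ω : ℝ) + 1) * π / 2

/-- Truncated cosine with truncation half-length `T`. -/
def truncCos (T u : ℝ) : ℝ := if |u| ≤ T then Real.cos u else 0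

lemma cintegral_ofReal {X : Type*} [MeasurableSpace X] {μ : Measure X} (f : X → ℝ) :
    ∫ x, ((f x : ℝ) : ℂ) ∂μ = ((∫ x, f x ∂μ : ℝ) : ℂ) := integral_ofReal

lemma cintegral_re {X : Type*} [MeasurableSpace X] {μ : Measure X} {f : X → ℂ}
    (hf : Integrable f μ) : ∫ x, (f x).re ∂μ = (∫ x, f x ∂μ).re := integral_re hf

lemma even_int (Ω : ℝ) (hΩ : 0 ≤ Ω) (f : ℝ → ℝ) (hf : Continuous f) (hev : ∀ t, f (-t) = f t) :
    ∫ t in Set.Icc (-Ω) Ω, f t = 2 * ∫ t in Set.Icc (0:ℝ) Ω, f t := by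
  rw [MeasureTheory.integral_Icc_eq_integral_Ioc, MeasureTheory.integral_Icc_eq_integral_Ioc,
    ← intervalIntegral.integral_of_le (by linarith : (-Ω) ≤ Ω),
    ← intervalIntegral.integral_of_le hΩ]
  have hadj := intervalIntegral.integral_add_adjacent_intervals
    (hf.intervalIntegrable (μ := volume) (-Ω) 0) (hf.intervalIntegrable (μ := volume) 0 Ω)
  have hneg : (∫ t in (-Ω)..(0:ℝ), f t) = ∫ t in (0:ℝ)..Ω, f t := by
    have h1 := intervalIntegral.integral_comp_neg (a := 0) (b := Ω) f
    rw [neg_zero] at h1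
    rw [← h1]
    simp_rw [hev]
  linarith [hadj, hneg]

lemma odd_int (Ω : ℝ) (hΩ : 0 ≤ Ω) (f : ℝ → ℝ) (hf : Continuous f) (hodd : ∀ t, f (-t) = -f t) :
    ∫ t in Set.Icc (-Ω) Ω, f t = 0 := by
  rw [MeasureTheory.integral_Icc_eq_integral_Ioc,
    ← intervalIntegral.integral_of_le (by linarith : (-Ω) ≤ Ω)]
  have hadj := intervalIntegral.integral_add_adjacent_intervals
    (hf.intervalIntegrable (μ := volume) (-Ω) 0) (hf.intervalIntegrable (μ := volume) 0 Ω)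
  have hneg : (∫ t in (-Ω)..(0:ℝ), f t) = -∫ t in (0:ℝ)..Ω, f t := by
    have h1 := intervalIntegral.integral_comp_neg (a := 0) (b := Ω) f
    rw [neg_zero] at h1
    rw [← h1]
    simp_rw [hodd, intervalIntegral.integral_neg]
  linarith [hadj, hneg]

lemma oneDim (Ω z : ℝ) (hΩ : 0 ≤ Ω) :
    (∫ t in Set.Icc (-Ω) Ω, ((|t| : ℝ) : ℂ) * Complex.exp (t * z * Complex.I)) =
      2 * ((∫ t in Set.Icc (0:ℝ) Ω, t * Real.cos (t * z) : ℝ) : ℂ) := by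
  have hsplit : ∀ t : ℝ, ((|t|:ℝ):ℂ) * Complex.exp (↑t * ↑z * Complex.I)
      = ((|t| * Real.cos (t*z) : ℝ) : ℂ) + ((|t| * Real.sin (t*z) : ℝ) : ℂ) * Complex.I := by
    intro t
    have h : (t:ℂ) * z = ((t*z : ℝ) : ℂ) := by push_cast; ring
    rw [h, Complex.exp_mul_I]
    push_cast
    ring
  simp_rw [hsplit]
  have hA : IntegrableOn (fun t : ℝ => ((|t| * Real.cos (t*z) : ℝ) : ℂ)) (Set.Icc (-Ω) Ω) :=
    (Complex.continuous_ofReal.comp (continuous_abs.mul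
      (Real.continuous_cos.comp (continuous_id.mul continuous_const)))).integrableOn_Icc
  have hB : IntegrableOn (fun t : ℝ => ((|t| * Real.sin (t*z) : ℝ) : ℂ) * Complex.I)
      (Set.Icc (-Ω) Ω) :=
    ((Complex.continuous_ofReal.comp (continuous_abs.mul
      (Real.continuous_sin.comp (continuous_id.mul continuous_const)))).mul
      continuous_const).integrableOn_Icc
  rw [MeasureTheory.integral_add hA hB, MeasureTheory.integral_mul_const, cintegral_ofReal,
    cintegral_ofReal]
  have hc : (∫ t in Set.Icc (-Ω) Ω, |t| * Real.cos (t*z))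
      = 2 * ∫ t in Set.Icc (0:ℝ) Ω, t * Real.cos (t*z) := by
    rw [even_int Ω hΩ (fun t => |t| * Real.cos (t*z)) (by fun_prop)
      (fun t => by simp [neg_mul])]
    congr 1
    apply MeasureTheory.setIntegral_congr_fun measurableSet_Icc
    intro t ht
    simp [abs_of_nonneg ht.1]
  have hs : (∫ t in Set.Icc (-Ω) Ω, |t| * Real.sin (t*z)) = 0 := by
    apply odd_int Ω hΩ (fun t => |t| * Real.sin (t*z)) (by fun_prop)
    intro t
    simp [neg_mul, Real.sin_neg]
  rw [hc, hs]
  push_cast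
  ring

lemma indicator_pi_prod {N : ℕ} {M : Type*} [CommMonoidWithZero M] (t : Fin N → Set ℝ)
    (f : Fin N → ℝ → M) (v : Fin N → ℝ) :
    (Set.pi Set.univ t).indicator (fun v => ∏ j, f j (v j)) v
      = ∏ j, (t j).indicator (f j) (v j) := by
  classical
  by_cases hv : v ∈ Set.pi Set.univ t
  · rw [Set.indicator_of_mem hv]
    exact Finset.prod_congr rfl fun j _ => (Set.indicator_of_mem (hv j (Set.mem_univ j)) _).symm
  · rw [Set.indicator_of_notMem hv]
    rw [Set.mem_univ_pi] at hv; push_neg at hv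
    obtain ⟨j, hj⟩ := hv
    exact (Finset.prod_eq_zero (Finset.mem_univ j) (Set.indicator_of_notMem hj _)).symm

lemma cube_integral {N : ℕ} {𝕜 : Type*} [RCLike 𝕜] (t : Fin N → Set ℝ)
    (ht : ∀ j, MeasurableSet (t j)) (f : Fin N → ℝ → 𝕜) :
    ∫ v : Fin N → ℝ in Set.pi Set.univ t, ∏ j, f j (v j) = ∏ j, ∫ x in t j, f j x := by
  rw [← integral_indicator (MeasurableSet.univ_pi ht)]
  simp_rw [indicator_pi_prod]
  rw [integral_fintype_prod_volume_eq_prod (f := fun j => (t j).indicator (f j))]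
  exact Finset.prod_congr rfl fun j _ => integral_indicator (ht j)

lemma euclid_to_pi {N : ℕ} {E : Type*} [NormedAddCommGroup E] [NormedSpace ℝ E]
    (g : (Fin N → ℝ) → E) :
    ∫ w : EuclideanSpace ℝ (Fin N), g (((MeasurableEquiv.toLp 2 (Fin N → ℝ)).symm) w)
      = ∫ v : Fin N → ℝ, g v :=
  (EuclideanSpace.volume_preserving_symm_measurableEquiv_toLp (Fin N)).integral_comp
    (MeasurableEquiv.measurableEmbedding _) g

lemma coord_le_norm {N : ℕ} (v : EuclideanSpace ℝ (Fin N)) (j : Fin N) : |v j| ≤ ‖v‖ := by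
  rw [EuclideanSpace.norm_eq]
  rw [show |v j| = Real.sqrt (|v j|^2) by rw [Real.sqrt_sq_eq_abs, abs_abs]]
  apply Real.sqrt_le_sqrt
  exact Finset.single_le_sum (f := fun i => ‖v i‖^2) (fun i _ => by positivity) (Finset.mem_univ j)

/-- **Symmetrization identity for the truncated cosine kernel.**
Let `K ⊂ ℝ^N` be compact, `Ω > 0`, and `L := ⌈(2N/π)·rad(K)·Ω − 1/2⌉`.  Then for all
`x, y ∈ K`,
`∫_{[0,Ω]^N} ∏_j w(j)·cos_Ω(w(j)(x(j) − y(j))) dw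
  = 2^{−N} ∫_{[−Ω,Ω]^N} cos_Ω(⟨w, x−y⟩)·|∏_j w(j)| dw`. -/
theorem truncCos_product_integral_identity
    {N : ℕ} (K : Set (EuclideanSpace ℝ (Fin N))) (hK : IsCompact K)
    (Ω : ℝ) (hΩ : 0 < Ω) (x y : EuclideanSpace ℝ (Fin N)) (hx : x ∈ K) (hy : y ∈ K) :
    (∫ w in {w : EuclideanSpace ℝ (Fin N) | ∀ j, w j ∈ Set.Icc (0 : ℝ) Ω},
        ∏ j, w j * truncCos (halfLen K Ω) (w j * (x j - y j))) =
      ((2 : ℝ) ^ N)⁻¹ *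
        ∫ w in {w : EuclideanSpace ℝ (Fin N) | ∀ j, |w j| ≤ Ω},
          truncCos (halfLen K Ω) ⟪w, x - y⟫ * |∏ j, w j| := by
  classical
  set T := halfLen K Ω with hTdef
  set z : Fin N → ℝ := fun j => x j - y j with hzdef
  have hπ := Real.pi_pos
  -- radius bounds
  have hrad : ∀ v ∈ K, ‖v‖ ≤ rad K := fun v hv =>
    le_csSup ((hK.image continuous_norm).bddAbove) ⟨v, hv, rfl⟩
  have hrad0 : (0:ℝ) ≤ rad K := le_trans (norm_nonneg x) (hrad x hx)
  have hzj : ∀ j, |z j| ≤ 2 * rad K := by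
    intro j
    have h1 : |(x - y) j| ≤ ‖x - y‖ := coord_le_norm (x - y) j
    have h2 : ‖x - y‖ ≤ ‖x‖ + ‖y‖ := norm_sub_le x y
    have h3 : (x - y) j = z j := by simp [hzdef]
    have := hrad x hx
    have := hrad y hy
    rw [h3] at h1
    linarith
  -- lower bound on the truncation half-length
  have hTge : 2 * (N:ℝ) * rad K * Ω ≤ T := by
    have h1 := Int.le_ceil ((2 * (N : ℝ) / π) * rad K * Ω - 1 / 2)
    rw [hTdef]
    unfold halfLen Lceil
    set c : ℝ := ((⌈(2 * (N : ℝ) / π) * rad K * Ω - 1 / 2⌉ : ℤ) : ℝ)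
    have h2 : 2 * (N:ℝ) * rad K * Ω / π ≤ c + 1/2 := by
      have : (2 * (N : ℝ) / π) * rad K * Ω = 2 * (N:ℝ) * rad K * Ω / π := by ring
      rw [this] at h1
      linarith
    have h3 := (div_le_iff₀ hπ).mp h2
    nlinarith
  have hzbnd : ∀ (w : EuclideanSpace ℝ (Fin N)), (∀ j, |w j| ≤ Ω) → ∀ j, |w j * z j| ≤ T := by
    intro w hw j
    have hN1 : (1:ℝ) ≤ N := by exact_mod_cast j.pos
    have := hzj j
    have habs : |w j * z j| = |w j| * |z j| := abs_mul _ _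
    have h1 : |w j| * |z j| ≤ Ω * (2 * rad K) :=
      mul_le_mul (hw j) this (abs_nonneg _) (le_of_lt hΩ)
    have h2 : Ω * (2 * rad K) ≤ 2 * (N:ℝ) * rad K * Ω := by
      have hnn : 0 ≤ 2 * rad K * Ω * ((N:ℝ) - 1) := by
        apply mul_nonneg _ (by linarith)
        positivity
      nlinarith
    linarith [habs ▸ h1]
  have hsumbnd : ∀ (w : EuclideanSpace ℝ (Fin N)), (∀ j, |w j| ≤ Ω) →
      |∑ j, w j * z j| ≤ T := by
    intro w hw
    calc |∑ j, w j * z j| ≤ ∑ j, |w j * z j| := Finset.abs_sum_le_sum_abs _ _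
      _ ≤ ∑ _j : Fin N, Ω * (2 * rad K) := by
          apply Finset.sum_le_sum
          intro j _
          rw [abs_mul]
          exact mul_le_mul (hw j) (hzj j) (abs_nonneg _) (le_of_lt hΩ)
      _ = (N:ℝ) * (Ω * (2 * rad K)) := by simp [Finset.sum_const, mul_comm]
      _ ≤ T := by nlinarith
  -- measurability of the two sets
  have hmeas : ∀ j : Fin N, Measurable (fun w : EuclideanSpace ℝ (Fin N) => w j) := by
    intro j
    exact (measurable_pi_apply j).comp ((MeasurableEquiv.toLp 2 (Fin N → ℝ)).symm).measurable
  have hmS1 : MeasurableSet {w : EuclideanSpace ℝ (Fin N) | ∀ j, w j ∈ Set.Icc (0 : ℝ) Ω} := by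
    have : {w : EuclideanSpace ℝ (Fin N) | ∀ j, w j ∈ Set.Icc (0 : ℝ) Ω}
        = ⋂ j, (fun w : EuclideanSpace ℝ (Fin N) => w j) ⁻¹' (Set.Icc (0:ℝ) Ω) := by
      ext w; simp [Set.mem_iInter]
    rw [this]
    exact MeasurableSet.iInter fun j => (hmeas j) measurableSet_Icc
  have hmS2 : MeasurableSet {w : EuclideanSpace ℝ (Fin N) | ∀ j, |w j| ≤ Ω} := by
    have : {w : EuclideanSpace ℝ (Fin N) | ∀ j, |w j| ≤ Ω}
        = ⋂ j, (fun w : EuclideanSpace ℝ (Fin N) => w j) ⁻¹' (Set.Icc (-Ω) Ω) := by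
      ext w; simp [Set.mem_iInter, abs_le]
    rw [this]
    exact MeasurableSet.iInter fun j => (hmeas j) measurableSet_Icc
  -- replace truncCos by cos on both sides
  have hL : (∫ w in {w : EuclideanSpace ℝ (Fin N) | ∀ j, w j ∈ Set.Icc (0 : ℝ) Ω},
        ∏ j, w j * truncCos T (w j * (x j - y j)))
      = ∫ w in {w : EuclideanSpace ℝ (Fin N) | ∀ j, w j ∈ Set.Icc (0 : ℝ) Ω},
        ∏ j, w j * Real.cos (w j * z j) := by
    apply MeasureTheory.setIntegral_congr_fun hmS1
    intro w hw
    apply Finset.prod_congr rfl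
    intro j _
    have habs : ∀ i, |w i| ≤ Ω := by
      intro i
      have := hw i
      rw [abs_of_nonneg this.1]
      exact this.2
    have := hzbnd w habs j
    rw [truncCos, if_pos this]
  have hR : (∫ w in {w : EuclideanSpace ℝ (Fin N) | ∀ j, |w j| ≤ Ω},
        truncCos T ⟪w, x - y⟫ * |∏ j, w j|)
      = ∫ w in {w : EuclideanSpace ℝ (Fin N) | ∀ j, |w j| ≤ Ω},
        Real.cos (∑ j, w j * z j) * ∏ j, |w j| := by
    apply MeasureTheory.setIntegral_congr_fun hmS2
    intro w hw
    show truncCos T ⟪w, x - y⟫ * |∏ j, w j| = Real.cos (∑ j, w j * z j) * ∏ j, |w j|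
    have hinner : ⟪w, x - y⟫ = ∑ j, w j * z j := by
      rw [PiLp.inner_apply]
      apply Finset.sum_congr rfl
      intro j _
      simp [hzdef, mul_comm]
    rw [hinner, truncCos, if_pos (hsumbnd w hw), Finset.abs_prod]
  rw [hL, hR]
  -- transfer to the pi space
  set B : Fin N → ℝ := fun j => ∫ t in Set.Icc (0:ℝ) Ω, t * Real.cos (t * z j) with hBdef
  have hLpi : (∫ w in {w : EuclideanSpace ℝ (Fin N) | ∀ j, w j ∈ Set.Icc (0 : ℝ) Ω},
        ∏ j, w j * Real.cos (w j * z j)) = ∏ j, B j := by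
    rw [← integral_indicator hmS1]
    have heq : (fun w : EuclideanSpace ℝ (Fin N) =>
        ({w : EuclideanSpace ℝ (Fin N) | ∀ j, w j ∈ Set.Icc (0 : ℝ) Ω}.indicator
          (fun w => ∏ j, w j * Real.cos (w j * z j)) w))
        = fun w => (Set.pi Set.univ (fun _ : Fin N => Set.Icc (0:ℝ) Ω)).indicator
            (fun v : Fin N → ℝ => ∏ j, v j * Real.cos (v j * z j))
            (((MeasurableEquiv.toLp 2 (Fin N → ℝ)).symm) w) := by
      funext w
      have hco : ∀ j, ((MeasurableEquiv.toLp 2 (Fin N → ℝ)).symm) w j = w j := by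
        intro j; rfl
      by_cases hw : w ∈ {w : EuclideanSpace ℝ (Fin N) | ∀ j, w j ∈ Set.Icc (0 : ℝ) Ω}
      · rw [Set.indicator_of_mem hw, Set.indicator_of_mem (by
          rw [Set.mem_univ_pi]; intro j; rw [hco j]; exact hw j)]
        simp_rw [hco]
      · rw [Set.indicator_of_notMem hw, Set.indicator_of_notMem (by
          rw [Set.mem_univ_pi]
          simp only [Set.mem_setOf_eq] at hw
          push_neg at hw ⊢
          obtain ⟨j, hj⟩ := hw; exact ⟨j, by rw [hco j]; exact hj⟩)]
    rw [heq, euclid_to_pi, ← hBdef]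
    rw [integral_indicator (MeasurableSet.univ_pi fun _ => measurableSet_Icc)]
    exact cube_integral _ (fun _ => measurableSet_Icc) (fun j t => t * Real.cos (t * z j))
  have hRpi : (∫ w in {w : EuclideanSpace ℝ (Fin N) | ∀ j, |w j| ≤ Ω},
        Real.cos (∑ j, w j * z j) * ∏ j, |w j|)
      = ∫ v : Fin N → ℝ in Set.pi Set.univ (fun _ : Fin N => Set.Icc (-Ω) Ω),
          Real.cos (∑ j, v j * z j) * ∏ j, |v j| := by
    rw [← integral_indicator hmS2]
    have heq : (fun w : EuclideanSpace ℝ (Fin N) =>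
        ({w : EuclideanSpace ℝ (Fin N) | ∀ j, |w j| ≤ Ω}.indicator
          (fun w => Real.cos (∑ j, w j * z j) * ∏ j, |w j|) w))
        = fun w => (Set.pi Set.univ (fun _ : Fin N => Set.Icc (-Ω) Ω)).indicator
            (fun v : Fin N → ℝ => Real.cos (∑ j, v j * z j) * ∏ j, |v j|)
            (((MeasurableEquiv.toLp 2 (Fin N → ℝ)).symm) w) := by
      funext w
      have hco : ∀ j, ((MeasurableEquiv.toLp 2 (Fin N → ℝ)).symm) w j = w j := by
        intro j; rfl
      by_cases hw : w ∈ {w : EuclideanSpace ℝ (Fin N) | ∀ j, |w j| ≤ Ω}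
      · rw [Set.indicator_of_mem hw, Set.indicator_of_mem (by
          rw [Set.mem_univ_pi]; intro j; rw [hco j]; exact abs_le.mp (hw j))]
        simp_rw [hco]
      · rw [Set.indicator_of_notMem hw, Set.indicator_of_notMem (by
          rw [Set.mem_univ_pi]
          simp only [Set.mem_setOf_eq] at hw
          push_neg at hw ⊢
          obtain ⟨j, hj⟩ := hw
          exact ⟨j, by rw [hco j]; intro h; exact absurd (abs_le.mpr h) (not_le.mpr hj)⟩)]
    rw [heq, euclid_to_pi]
    rw [integral_indicator (MeasurableSet.univ_pi fun _ => measurableSet_Icc)]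
  rw [hLpi, hRpi]
  -- the complex-exponential computation on the pi side
  set Gc : Fin N → ℝ → ℂ := fun j t => ((|t| : ℝ) : ℂ) * Complex.exp (t * z j * Complex.I)
    with hGcdef
  have hGcont : ∀ j, Continuous (Gc j) := by
    intro j
    apply Continuous.mul
    · exact Complex.continuous_ofReal.comp continuous_abs
    · exact Complex.continuous_exp.comp (by fun_prop)
  have hGint : ∀ j, Integrable ((Set.Icc (-Ω) Ω).indicator (Gc j)) :=
    fun j => ((hGcont j).integrableOn_Icc).integrable_indicator measurableSet_Icc
  have hre : ∀ v : Fin N → ℝ,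
      Real.cos (∑ j, v j * z j) * ∏ j, |v j| = (∏ j, Gc j (v j)).re := by
    intro v
    rw [hGcdef]
    simp only
    rw [Finset.prod_mul_distrib, ← Complex.exp_sum]
    have h1 : (∑ j, (v j : ℂ) * (z j) * Complex.I) = ((∑ j, v j * z j : ℝ) : ℂ) * Complex.I := by
      push_cast
      rw [Finset.sum_mul]
    have h2 : (∏ j, ((|v j| : ℝ) : ℂ)) = ((∏ j, |v j| : ℝ) : ℂ) := by push_cast; rfl
    rw [h1, h2, Complex.re_ofReal_mul, Complex.exp_ofReal_mul_I_re]
    ring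
  have hRval : (∫ v : Fin N → ℝ in Set.pi Set.univ (fun _ : Fin N => Set.Icc (-Ω) Ω),
      Real.cos (∑ j, v j * z j) * ∏ j, |v j|) = 2^N * ∏ j, B j := by
    simp_rw [hre]
    rw [← integral_indicator (MeasurableSet.univ_pi fun _ => measurableSet_Icc)]
    have hcomm : (fun v : Fin N → ℝ =>
        (Set.pi Set.univ (fun _ : Fin N => Set.Icc (-Ω) Ω)).indicator
          (fun v => (∏ j, Gc j (v j)).re) v)
        = fun v => ((Set.pi Set.univ (fun _ : Fin N => Set.Icc (-Ω) Ω)).indicator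
          (fun v => ∏ j, Gc j (v j)) v).re := by
      funext v
      simp [Set.indicator_apply, apply_ite Complex.re]
    rw [hcomm]
    have hprodind : (fun v : Fin N → ℝ =>
        (Set.pi Set.univ (fun _ : Fin N => Set.Icc (-Ω) Ω)).indicator
          (fun v => ∏ j, Gc j (v j)) v)
        = fun v => ∏ j, (Set.Icc (-Ω) Ω).indicator (Gc j) (v j) := by
      funext v
      exact indicator_pi_prod _ _ _
    rw [show (fun v : Fin N → ℝ => ((Set.pi Set.univ (fun _ : Fin N => Set.Icc (-Ω) Ω)).indicator
          (fun v => ∏ j, Gc j (v j)) v).re)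
        = fun v => ((∏ j, (Set.Icc (-Ω) Ω).indicator (Gc j) (v j) : ℂ)).re by
      funext v; rw [← congrFun hprodind v]]
    rw [cintegral_re (μ := volume) (Integrable.fintype_prod hGint)]
    rw [integral_fintype_prod_volume_eq_prod (f := fun j => (Set.Icc (-Ω) Ω).indicator (Gc j))]
    have : ∀ j, (∫ t : ℝ, (Set.Icc (-Ω) Ω).indicator (Gc j) t) = 2 * ((B j : ℝ) : ℂ) := by
      intro j
      rw [integral_indicator measurableSet_Icc, hBdef]
      exact oneDim Ω (z j) (le_of_lt hΩ)
    simp_rw [this]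
    rw [Finset.prod_mul_distrib, Finset.prod_const, Finset.card_univ, Fintype.card_fin,
      ← Complex.ofReal_prod]
    norm_cast
  rw [hRval]
  have h2N : ((2:ℝ)^N) ≠ 0 := by positivity
  field_simp
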